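/- Let X : ℝ → ℝ^d be a continuously differentiable path. For s ≤ t and indices j₁, …, j_n ∈ {1, …, d}, define the iterated integral ⟨X_{st}, (j₁, …, j_n)⟩ := ∫_{s ≤ t_n ≤ ⋯ ≤ t₁ ≤ t} Ẋ_{j₁}(t₁) ⋯ Ẋ_{j_n}(t_n) dt₁ ⋯ dt_n, and ⟨X_{st}, ()⟩ := 1 for the empty index list. Then for all s ≤ u ≤ t, Chen's identity holds: ⟨X_{st}, (j₁, …, j_n)⟩ = Σ_{k=0}^{n} ⟨X_{ut}, (j₁, …, j_k)⟩ · ⟨X_{su}, (j_{k+1}, …, j_n)⟩. -/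

import Mathlib

open MeasureTheory

/-- The iterated (signature) integral `⟨X_{st}, L⟩` of a path `X : ℝ → ℝ^d` over the simplex
`s ≤ t_n ≤ ⋯ ≤ t₁ ≤ t`, for a list `L` of coordinate indices. For the empty list it
equals `1`. -/
noncomputable def sig (d : ℕ) (X : ℝ → Fin d → ℝ) (s t : ℝ) (L : List (Fin d)) : ℝ :=
  ∫ u in {u : Fin L.length → ℝ | (∀ i, u i ∈ Set.Icc s t) ∧
      ∀ i i' : Fin L.length, i ≤ i' → u i' ≤ u i},
    ∏ i, deriv (fun τ => X τ (L.get i)) (u i)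

/-- The simplex `s ≤ u_{n-1} ≤ ⋯ ≤ u_0 ≤ t` in `ℝ^n`. -/
def Sx (n : ℕ) (s t : ℝ) : Set (Fin n → ℝ) :=
  {u : Fin n → ℝ | (∀ i, u i ∈ Set.Icc s t) ∧ ∀ i i' : Fin n, i ≤ i' → u i' ≤ u i}

lemma isClosed_Sx (n : ℕ) (s t : ℝ) : IsClosed (Sx n s t) := by
  have h : Sx n s t = (⋂ i, {u : Fin n → ℝ | u i ∈ Set.Icc s t}) ∩
      ⋂ i, ⋂ i', ⋂ (_ : i ≤ i'), {u : Fin n → ℝ | u i' ≤ u i} := by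
    ext u; simp [Sx]
  rw [h]
  exact (isClosed_iInter fun i => isClosed_Icc.preimage (continuous_apply i)).inter
    (isClosed_iInter fun i => isClosed_iInter fun i' => isClosed_iInter fun _ =>
      isClosed_le (continuous_apply i') (continuous_apply i))

lemma isCompact_Sx (n : ℕ) (s t : ℝ) : IsCompact (Sx n s t) := by
  refine IsCompact.of_isClosed_subset
    (isCompact_univ_pi fun _ : Fin n => (isCompact_Icc : IsCompact (Set.Icc s t)))
    (isClosed_Sx n s t) ?_
  intro u hu i _
  exact hu.1 i

lemma measurableSet_Sx (n : ℕ) (s t : ℝ) : MeasurableSet (Sx n s t) :=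
  (isClosed_Sx n s t).measurableSet

lemma mem_Sx_cons {n : ℕ} {s t τ : ℝ} (hτ : τ ∈ Set.Icc s t) (v : Fin n → ℝ) :
    Fin.cons τ v ∈ Sx (n + 1) s t ↔ v ∈ Sx n s τ := by
  constructor
  · rintro ⟨h1, h2⟩
    refine ⟨fun i => ⟨(h1 i.succ).1, ?_⟩, fun i i' h => ?_⟩
    · have := h2 0 i.succ (Fin.zero_le _)
      simpa using this
    · have := h2 i.succ i'.succ (by simpa using h)
      simpa using this
  · rintro ⟨h1, h2⟩
    constructor
    · intro i
      refine Fin.cases ?_ (fun k => ?_) i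
      · simpa using hτ
      · simpa using ⟨(h1 k).1, (h1 k).2.trans hτ.2⟩
    · intro i i' h
      refine Fin.cases (fun i' h => ?_) (fun k i' h => ?_) i i' h
      · refine Fin.cases ?_ (fun k' => ?_) i'
        · simp
        · simpa using (h1 k').2
      · refine Fin.cases (fun h => ?_) (fun k' h => ?_) i' h
        · exact absurd h (by simp [Fin.le_def])
        · have : k ≤ k' := by simpa [Fin.succ_le_succ_iff] using h
          simpa using h2 k k' this

lemma cons_notMem_Sx {n : ℕ} {s t τ : ℝ} (hτ : τ ∉ Set.Icc s t) (v : Fin n → ℝ) :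
    Fin.cons τ v ∉ Sx (n + 1) s t := by
  intro h
  exact hτ (by simpa using h.1 0)

/-- The recursively defined iterated integral. -/
noncomputable def sigF (d : ℕ) (X : ℝ → Fin d → ℝ) : List (Fin d) → ℝ → ℝ → ℝ
  | [], _, _ => 1
  | j :: L, s, t => ∫ τ in s..t, deriv (fun ρ => X ρ j) τ * sigF d X L s τ

lemma continuous_sigF (d : ℕ) (X : ℝ → Fin d → ℝ)
    (hX : ∀ j : Fin d, ContDiff ℝ 1 (fun τ => X τ j)) (L : List (Fin d)) (s : ℝ) :
    Continuous (fun t => sigF d X L s t) := by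
  induction L with
  | nil => exact continuous_const
  | cons j L ih =>
    have hc : Continuous (fun τ => deriv (fun ρ => X ρ j) τ * sigF d X L s τ) :=
      ((hX j).continuous_deriv le_rfl).mul ih
    exact intervalIntegral.continuous_primitive (fun a b => hc.intervalIntegrable a b) s

lemma chen_sigF (d : ℕ) (X : ℝ → Fin d → ℝ)
    (hX : ∀ j : Fin d, ContDiff ℝ 1 (fun τ => X τ j)) (L : List (Fin d)) :
    ∀ s u t : ℝ, s ≤ u → u ≤ t →
      sigF d X L s t = ∑ k ∈ Finset.range (L.length + 1),
        sigF d X (L.take k) u t * sigF d X (L.drop k) s u := by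
  induction L with
  | nil => intro s u t _ _; simp [sigF]
  | cons j L ih =>
    intro s u t hsu hut
    have hder : Continuous (deriv (fun ρ => X ρ j)) := (hX j).continuous_deriv le_rfl
    have hg : Continuous (fun τ => deriv (fun ρ => X ρ j) τ * sigF d X L s τ) :=
      hder.mul (continuous_sigF d X hX L s)
    have hsplit : sigF d X (j :: L) s t = sigF d X (j :: L) s u +
        ∫ τ in u..t, deriv (fun ρ => X ρ j) τ * sigF d X L s τ := by
      show (∫ τ in s..t, _) = (∫ τ in s..u, _) + _
      rw [intervalIntegral.integral_add_adjacent_intervals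
        (hg.intervalIntegrable s u) (hg.intervalIntegrable u t)]
    have hmid : (∫ τ in u..t, deriv (fun ρ => X ρ j) τ * sigF d X L s τ)
        = ∑ k ∈ Finset.range (L.length + 1),
            sigF d X (j :: L.take k) u t * sigF d X (L.drop k) s u := by
      have heq : Set.EqOn (fun τ => deriv (fun ρ => X ρ j) τ * sigF d X L s τ)
          (fun τ => ∑ k ∈ Finset.range (L.length + 1),
            (deriv (fun ρ => X ρ j) τ * sigF d X (L.take k) u τ) * sigF d X (L.drop k) s u)
          (Set.uIcc u t) := by
        intro τ hτ
        rw [Set.uIcc_of_le hut] at hτ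
        simp only
        rw [ih s u τ hsu hτ.1, Finset.mul_sum]
        exact Finset.sum_congr rfl fun k _ => by ring
      rw [intervalIntegral.integral_congr heq]
      rw [intervalIntegral.integral_finset_sum]
      · refine Finset.sum_congr rfl fun k _ => ?_
        rw [intervalIntegral.integral_mul_const]
        rfl
      · intro k _
        exact ((hder.mul (continuous_sigF d X hX (L.take k) u)).mul
          continuous_const).intervalIntegrable u t
    rw [hsplit, hmid]
    simp only [List.length_cons]
    rw [Finset.sum_range_succ' (fun k => sigF d X ((j :: L).take k) u t *
      sigF d X ((j :: L).drop k) s u) (L.length + 1)]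
    simp only [List.take_succ_cons, List.drop_succ_cons, List.take_zero, List.drop_zero]
    have : sigF d X ([] : List (Fin d)) u t = 1 := rfl
    rw [this]
    ring

lemma sig_eq_sigF (d : ℕ) (X : ℝ → Fin d → ℝ)
    (hX : ∀ j : Fin d, ContDiff ℝ 1 (fun τ => X τ j)) (L : List (Fin d)) :
    ∀ s t : ℝ, s ≤ t → sig d X s t L = sigF d X L s t := by
  induction L with
  | nil =>
    intro s t _
    have huniv : {u : Fin (List.length ([] : List (Fin d))) → ℝ |
        (∀ i, u i ∈ Set.Icc s t) ∧
        ∀ i i' : Fin (List.length ([] : List (Fin d))), i ≤ i' → u i' ≤ u i} = Set.univ := by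
      ext u
      constructor
      · intro _; trivial
      · intro _; exact ⟨fun i => Fin.elim0 i, fun i => Fin.elim0 i⟩
    rw [sig, huniv]
    simp only [Measure.restrict_univ]
    have : ∀ u : Fin (List.length ([] : List (Fin d))) → ℝ,
        (∏ i, deriv (fun τ => X τ (([] : List (Fin d)).get i)) (u i)) = 1 := by
      intro u
      exact Finset.prod_eq_one fun i _ => absurd i.isLt (by simp)
    rw [integral_congr_ae (Filter.Eventually.of_forall this)]
    simp only [integral_const, smul_eq_mul, mul_one]
    rw [show (volume : Measure (Fin (List.length ([] : List (Fin d))) → ℝ)) =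
      Measure.pi (fun _ => volume) from volume_pi]
    simp [Measure.pi_univ]
    show _ = (1:ℝ)
    simp [Measure.real, Measure.pi_univ]
  | cons j L ih =>
    intro s t hst
    set n := L.length with hn
    have hder : ∀ j' : Fin d, Continuous (deriv (fun ρ => X ρ j')) :=
      fun j' => (hX j').continuous_deriv le_rfl
    -- the integrand on ℝ^(n+1)
    set f : (Fin (n + 1) → ℝ) → ℝ :=
      fun w => ∏ i, deriv (fun τ => X τ ((j :: L).get i)) (w i) with hf
    have hfc : Continuous f := by
      apply continuous_finset_prod
      intro i _
      exact (hder _).comp (continuous_apply i)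
    -- the inner integrand on ℝ^n
    set fL : (Fin n → ℝ) → ℝ :=
      fun v => ∏ i, deriv (fun τ => X τ (L.get i)) (v i) with hfL
    have hfLc : Continuous fL := by
      apply continuous_finset_prod
      intro i _
      exact (hder _).comp (continuous_apply i)
    have hsig : sig d X s t (j :: L) = ∫ w, Set.indicator (Sx (n + 1) s t) f w := by
      rw [sig, integral_indicator (measurableSet_Sx (n + 1) s t)]
      rfl
    have hsig' : ∀ τ, sig d X s τ L = ∫ v, Set.indicator (Sx n s τ) fL v := by
      intro τ
      rw [sig, integral_indicator (measurableSet_Sx n s τ)]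
      rfl
    -- integrability of the indicator
    have hint : Integrable (Set.indicator (Sx (n + 1) s t) f) := by
      refine (IntegrableOn.integrable_indicator ?_ (measurableSet_Sx (n + 1) s t))
      exact hfc.continuousOn.integrableOn_compact (isCompact_Sx (n + 1) s t)
    -- measure preserving equivalence
    have hmp := MeasureTheory.volume_preserving_piFinSuccAbove (fun _ : Fin (n + 1) => ℝ) 0
    set e := MeasurableEquiv.piFinSuccAbove (fun _ : Fin (n + 1) => ℝ) 0 with he
    have hcompint : Integrable (fun p : ℝ × (Fin n → ℝ) =>
        Set.indicator (Sx (n + 1) s t) f (e.symm p)) := by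
      exact ((hmp.symm e).integrable_comp_emb e.symm.measurableEmbedding).2 hint
    have step1 : (∫ w, Set.indicator (Sx (n + 1) s t) f w)
        = ∫ p : ℝ × (Fin n → ℝ), Set.indicator (Sx (n + 1) s t) f (e.symm p) :=
      ((hmp.symm e).integral_comp e.symm.measurableEmbedding _).symm
    have hsymm : ∀ (τ : ℝ) (v : Fin n → ℝ), e.symm (τ, v) = Fin.cons τ v := by
      intro τ v
      rw [MeasurableEquiv.piFinSuccAbove_symm_apply]
      exact Fin.insertNth_zero' τ v
    have step2 : (∫ p : ℝ × (Fin n → ℝ), Set.indicator (Sx (n + 1) s t) f (e.symm p))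
        = ∫ τ : ℝ, ∫ v : Fin n → ℝ, Set.indicator (Sx (n + 1) s t) f (Fin.cons τ v) := by
      rw [MeasureTheory.Measure.volume_eq_prod]
      rw [MeasureTheory.integral_prod _ (by
        rw [← MeasureTheory.Measure.volume_eq_prod]; exact hcompint)]
      simp_rw [hsymm]
    -- pointwise evaluation of the inner integral
    have key : ∀ τ : ℝ, (∫ v : Fin n → ℝ, Set.indicator (Sx (n + 1) s t) f (Fin.cons τ v))
        = Set.indicator (Set.Icc s t)
            (fun τ => deriv (fun ρ => X ρ j) τ * sig d X s τ L) τ := by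
      intro τ
      by_cases hτ : τ ∈ Set.Icc s t
      · have hptwise : ∀ v : Fin n → ℝ, Set.indicator (Sx (n + 1) s t) f (Fin.cons τ v)
            = deriv (fun ρ => X ρ j) τ * Set.indicator (Sx n s τ) fL v := by
          intro v
          have hfcons : f (Fin.cons τ v) = deriv (fun ρ => X ρ j) τ * fL v := by
            have h0 : f (Fin.cons τ v)
                = ∏ i : Fin (n + 1), deriv (fun τ' => X τ' ((j :: L).get i))
                    ((Fin.cons τ v : Fin (n + 1) → ℝ) i) := rfl
            rw [h0, Fin.prod_univ_succ]
            simp [fL]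
            exact Or.inl rfl
          by_cases hv : v ∈ Sx n s τ
          · rw [Set.indicator_of_mem ((mem_Sx_cons hτ v).2 hv),
              Set.indicator_of_mem hv, hfcons]
          · rw [Set.indicator_of_notMem (fun h => hv ((mem_Sx_cons hτ v).1 h)),
              Set.indicator_of_notMem hv, mul_zero]
        rw [integral_congr_ae (Filter.Eventually.of_forall hptwise),
          MeasureTheory.integral_const_mul, Set.indicator_of_mem hτ, hsig' τ]
      · have hptwise : ∀ v : Fin n → ℝ,
            Set.indicator (Sx (n + 1) s t) f (Fin.cons τ v) = 0 := fun v =>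
          Set.indicator_of_notMem (cons_notMem_Sx hτ v) f
        rw [integral_congr_ae (Filter.Eventually.of_forall hptwise),
          integral_zero, Set.indicator_of_notMem hτ]
    calc sig d X s t (j :: L)
        = ∫ τ : ℝ, Set.indicator (Set.Icc s t)
            (fun τ => deriv (fun ρ => X ρ j) τ * sig d X s τ L) τ := by
          rw [hsig, step1, step2]
          exact integral_congr_ae (Filter.Eventually.of_forall key)
      _ = ∫ τ in Set.Icc s t, deriv (fun ρ => X ρ j) τ * sig d X s τ L :=
          integral_indicator measurableSet_Icc
      _ = ∫ τ in Set.Icc s t, deriv (fun ρ => X ρ j) τ * sigF d X L s τ := by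
          refine setIntegral_congr_fun measurableSet_Icc fun τ hτ => ?_
          rw [ih s τ hτ.1]
      _ = ∫ τ in Set.Ioc s t, deriv (fun ρ => X ρ j) τ * sigF d X L s τ :=
          integral_Icc_eq_integral_Ioc
      _ = ∫ τ in s..t, deriv (fun ρ => X ρ j) τ * sigF d X L s τ :=
          (intervalIntegral.integral_of_le hst).symm
      _ = sigF d X (j :: L) s t := rfl

/-- **Chen's identity.** For a continuously differentiable path
`X : ℝ → ℝ^d` and `s ≤ u ≤ t`,
`⟨X_{st}, (j₁,…,jₙ)⟩ = Σ_{k=0}^n ⟨X_{ut}, (j₁,…,j_k)⟩·⟨X_{su}, (j_{k+1},…,jₙ)⟩`. -/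
theorem stmt18 (d : ℕ) (X : ℝ → Fin d → ℝ)
    (hX : ∀ j : Fin d, ContDiff ℝ 1 (fun τ => X τ j))
    (L : List (Fin d)) (s u t : ℝ) (hsu : s ≤ u) (hut : u ≤ t) :
    sig d X s t L
      = ∑ k ∈ Finset.range (L.length + 1),
          sig d X u t (L.take k) * sig d X s u (L.drop k) := by
  rw [sig_eq_sigF d X hX L s t (hsu.trans hut),
    chen_sigF d X hX L s u t hsu hut]
  refine Finset.sum_congr rfl fun k _ => ?_
  rw [sig_eq_sigF d X hX (L.take k) u t hut, sig_eq_sigF d X hX (L.drop k) s u hsu]
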